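/- Let (θ_n) be any sequence of real numbers, let λ > 0, and let A > 1. Then there exists a real number α with A ≤ α ≤ A + A/(λ(A-1)) such that for every n ≥ 1, the distance from λα^n to the nearest integer differs from θ_n by at most 1/(2(A-1)), i.e., ‖λα^n − θ_n‖ ≤ 1/(2(A-1)). -/
import Mathlib


/-- For a real number `x`, the distance from `x` to the nearest integer. -/
noncomputable def distNearestInt (x : ℝ) : ℝ := |x - round x|

private lemma dist_nearest_le (x : ℝ) (m : ℤ) (δ : ℝ) (hδ : 0 < δ)
    (h : |x - m| ≤ δ) : distNearestInt x ≤ δ := by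
  unfold distNearestInt
  rcases le_or_gt (1/2 : ℝ) δ with hc | hc
  · exact le_trans (abs_sub_round x) hc
  · have hm : round x = m := by
      rw [round_eq]
      refine Int.floor_eq_iff.2 ?_
      rw [abs_le] at h
      constructor <;> [skip; skip] <;> push_cast <;> linarith
    rw [hm]; exact h

private lemma exists_chain {α : Type*} (base : α) (Inv : ℕ → α → Prop) (R : ℕ → α → α → Prop)
    (hbase : Inv 0 base)
    (hstep : ∀ k p, Inv k p → ∃ q, Inv (k+1) q ∧ R k p q) :
    ∃ f : ℕ → α, f 0 = base ∧ (∀ k, Inv k (f k)) ∧ ∀ k, R k (f k) (f (k+1)) := by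
  choose g hg1 hg2 using hstep
  let F : ∀ n : ℕ, {p : α // Inv n p} :=
    fun n => Nat.rec ⟨base, hbase⟩ (fun k p => ⟨g k p.1 p.2, hg1 k p.1 p.2⟩) n
  exact ⟨fun n => (F n).1, rfl, fun k => (F k).2, fun k => hg2 k (F k).1 (F k).2⟩

theorem lambda_alpha_pow_close_to_sequence
    (θ : ℕ → ℝ) (lam A : ℝ) (hlam : 0 < lam) (hA : 1 < A) :
    ∃ α : ℝ, A ≤ α ∧ α ≤ A + A / (lam * (A - 1)) ∧
      ∀ n : ℕ, 1 ≤ n → distNearestInt (lam * α ^ n - θ n) ≤ 1 / (2 * (A - 1)) := by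
  have hA1 : (0:ℝ) < A - 1 := by linarith
  set δ : ℝ := 1 / (2 * (A - 1)) with hδdef
  have hδpos : 0 < δ := by positivity
  have hkey : A * (2 * δ) = 1 + 2 * δ := by
    rw [hδdef]; field_simp; ring
  -- invariant and relation
  set Inv : ℕ → ℝ × ℝ → Prop := fun k p =>
    A ≤ p.1 ∧ p.1 ≤ p.2 ∧ 1 + 2*δ ≤ lam * p.2^(k+1) - lam * p.1^(k+1) with hInv
  set R : ℕ → ℝ × ℝ → ℝ × ℝ → Prop := fun k p q =>
    p.1 ≤ q.1 ∧ q.2 ≤ p.2 ∧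
      ∃ m : ℤ, lam * q.1^(k+1) = m + θ (k+1) - δ ∧ lam * q.2^(k+1) = m + θ (k+1) + δ with hR
  have hbase : Inv 0 (A, A + A / (lam * (A - 1))) := by
    have hpos : 0 < A / (lam * (A - 1)) := by positivity
    refine ⟨le_refl A, by simp only; linarith, ?_⟩
    simp only [zero_add, pow_one]
    have h1 : lam * (A + A / (lam * (A - 1))) - lam * A = A / (A-1) := by
      field_simp; ring
    have h2 : A / (A-1) = 1 + 2*δ := by rw [hδdef]; field_simp; ring
    rw [h1, h2]
  have hstep : ∀ k p, Inv k p → ∃ q, Inv (k+1) q ∧ R k p q := by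
    rintro k ⟨a, b⟩ ⟨ha, hab, hlen⟩
    simp only at ha hab hlen
    have h0a : (0:ℝ) < a := lt_of_lt_of_le (by linarith) ha
    set u := lam * a^(k+1) with hu
    set v := lam * b^(k+1) with hv
    set m : ℤ := ⌈u + δ - θ (k+1)⌉ with hm
    have hm1 : u + δ - θ (k+1) ≤ m := Int.le_ceil _
    have hm2 : (m:ℝ) < u + δ - θ (k+1) + 1 := Int.ceil_lt_add_one _
    have huv1 : u ≤ (m:ℝ) + θ (k+1) - δ := by linarith
    have huv2 : (m:ℝ) + θ (k+1) + δ ≤ v := by linarith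
    -- continuity / IVT
    have hcont : ContinuousOn (fun x : ℝ => lam * x^(k+1)) (Set.Icc a b) := by
      fun_prop
    have hIVT := intermediate_value_Icc hab hcont
    obtain ⟨a', ha'mem, ha'⟩ := hIVT (by
      constructor
      · exact huv1
      · linarith : ((m:ℝ) + θ (k+1) - δ) ∈ Set.Icc (lam * a^(k+1)) (lam * b^(k+1)))
    obtain ⟨b', hb'mem, hb'⟩ := hIVT (by
      constructor
      · linarith
      · exact huv2 : ((m:ℝ) + θ (k+1) + δ) ∈ Set.Icc (lam * a^(k+1)) (lam * b^(k+1)))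
    simp only at ha' hb'
    obtain ⟨ha'1, ha'2⟩ := ha'mem
    obtain ⟨hb'1, hb'2⟩ := hb'mem
    have h0a' : (0:ℝ) < a' := lt_of_lt_of_le h0a ha'1
    have ha'b' : a' ≤ b' := by
      by_contra hcon
      push_neg at hcon
      have : b'^(k+1) ≤ a'^(k+1) := pow_le_pow_left₀ (by linarith [hb'1]) hcon.le _
      have : lam * b'^(k+1) ≤ lam * a'^(k+1) := by nlinarith
      rw [ha', hb'] at this
      linarith
    refine ⟨(a', b'), ⟨le_trans ha ha'1, ha'b', ?_⟩, ha'1, hb'2, m, ha', hb'⟩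
    -- length at next exponent
    have hAa' : A ≤ a' := le_trans ha ha'1
    have hpow : a'^(k+1) ≤ b'^(k+1) := pow_le_pow_left₀ h0a'.le ha'b' _
    have hgap : A * (b'^(k+1) - a'^(k+1)) ≤ b'^(k+2) - a'^(k+2) := by
      have h1 : a' * (b'^(k+1) - a'^(k+1)) ≤ b' * b'^(k+1) - a' * a'^(k+1) := by
        nlinarith [pow_nonneg (le_trans h0a'.le ha'b') (k+1)]
      have h2 : A * (b'^(k+1) - a'^(k+1)) ≤ a' * (b'^(k+1) - a'^(k+1)) := by
        nlinarith
      calc A * (b'^(k+1) - a'^(k+1)) ≤ b' * b'^(k+1) - a' * a'^(k+1) := le_trans h2 h1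
        _ = b'^(k+2) - a'^(k+2) := by ring
    have hlen' : lam * (b'^(k+1) - a'^(k+1)) = 2*δ := by
      rw [mul_sub, ha', hb']; ring
    have h3 : A * (lam * (b'^(k+1) - a'^(k+1))) ≤ lam * (b'^(k+2) - a'^(k+2)) := by
      calc A * (lam * (b'^(k+1) - a'^(k+1))) = lam * (A * (b'^(k+1) - a'^(k+1))) := by ring
        _ ≤ lam * (b'^(k+2) - a'^(k+2)) := mul_le_mul_of_nonneg_left hgap hlam.le
    rw [hlen', hkey] at h3
    have h4 : lam * (b'^(k+2) - a'^(k+2)) = lam * b'^(k+2) - lam * a'^(k+2) := by ring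
    simp only
    linarith
  obtain ⟨f, hf0, hfInv, hfR⟩ := exists_chain _ Inv R hbase hstep
  set a : ℕ → ℝ := fun n => (f n).1 with hadef
  set b : ℕ → ℝ := fun n => (f n).2 with hbdef
  have ha0 : a 0 = A := by rw [hadef]; simp [hf0]
  have hb0 : b 0 = A + A / (lam * (A - 1)) := by rw [hbdef]; simp [hf0]
  have hAa : ∀ k, A ≤ a k := fun k => (hfInv k).1
  have hab : ∀ k, a k ≤ b k := fun k => (hfInv k).2.1
  have hmono : Monotone a := monotone_nat_of_le_succ (fun k => (hfR k).1)
  have hanti : Antitone b := antitone_nat_of_succ_le (fun k => (hfR k).2.1)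
  have hcross : ∀ i j, a i ≤ b j := by
    intro i j
    calc a i ≤ a (max i j) := hmono (le_max_left _ _)
      _ ≤ b (max i j) := hab _
      _ ≤ b j := hanti (le_max_right _ _)
  have hbdd : BddAbove (Set.range a) := ⟨b 0, by rintro x ⟨i, rfl⟩; exact hcross i 0⟩
  set α := ⨆ k, a k with hα
  have hle : ∀ k, a k ≤ α := fun k => le_ciSup hbdd k
  have hge : ∀ k, α ≤ b k := fun k => ciSup_le (fun i => hcross i k)
  refine ⟨α, by rw [← ha0]; exact hle 0, by rw [← hb0]; exact hge 0, ?_⟩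
  intro n hn
  obtain (_ | k) := n
  · omega
  obtain ⟨m, hma, hmb⟩ := (hfR k).2.2
  have h0 : (0:ℝ) ≤ a (k+1) := le_trans (by linarith) (hAa (k+1))
  have h1 : a (k+1) ^ (k+1) ≤ α ^ (k+1) := pow_le_pow_left₀ h0 (hle (k+1)) _
  have h2 : α ^ (k+1) ≤ b (k+1) ^ (k+1) :=
    pow_le_pow_left₀ (le_trans h0 (hle (k+1))) (hge (k+1)) _
  have h1' : lam * a (k+1) ^ (k+1) ≤ lam * α ^ (k+1) := by nlinarith
  have h2' : lam * α ^ (k+1) ≤ lam * b (k+1) ^ (k+1) := by nlinarith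
  refine dist_nearest_le _ m δ hδpos ?_
  rw [abs_le]
  rw [hma] at h1'
  rw [hmb] at h2'
  constructor <;> linarith
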